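/- Let F be a 2-regular spanning subgraph (a 2-factor, possibly with 2-cycles/doubled edges) of a cubic graph G, and let h be a hexagonal face of G such that exactly three pairwise non-adjacent edges of the boundary cycle C_h of h belong to F and these three edges lie on three distinct cycles of F. Then the symmetric difference F' = F Δ C_h is again a 2-regular spanning subgraph of G, and the number of connected components of F' is exactly two less than that of F. -/

import Mathlib

set_option linter.unreachableTactic false
set_option linter.unusedTactic false
set_option linter.unusedSectionVars false

open SimpleGraph

/-- Two edges (as unordered pairs) are non-adjacent if they share no vertex. -/
def Sym2.NoCommonVertex {V : Type} (e f : Sym2 V) : Prop := ∀ v : V, v ∈ e → v ∉ f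

section Helpers
variable {V : Type} [Fintype V] [DecidableEq V]


/-- In a 2-regular graph, deleting an edge keeps its endpoints connected. -/
lemma two_regular_reachable_deleteEdge (H : SimpleGraph V)
    (h2 : ∀ v, (H.neighborSet v).ncard = 2) {x y : V} (hxy : H.Adj x y) :
    (H.deleteEdges {s(x, y)}).Reachable x y := by
  classical
  set H' := H.deleteEdges {s(x, y)} with hH'def
  by_contra hreach
  have hyK : H'.connectedComponentMk y ≠ H'.connectedComponentMk x := by
    intro h
    exact hreach ((SimpleGraph.ConnectedComponent.eq.mp h).symm)
  -- restrict to the component of x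
  let H'' : SimpleGraph V :=
    { Adj := fun u v => H'.Adj u v ∧ H'.connectedComponentMk u = H'.connectedComponentMk x
      symm := by
        constructor; rintro u v ⟨h1, h2'⟩
        refine ⟨h1.symm, ?_⟩
        rw [← h2']
        exact (SimpleGraph.ConnectedComponent.connectedComponentMk_eq_of_adj h1).symm
      loopless := ⟨fun u h => H'.loopless.irrefl u h.1⟩ }
  letI : DecidableRel H''.Adj := Classical.decRel _
  have hN : ∀ u, H''.neighborSet u = if H'.connectedComponentMk u = H'.connectedComponentMk x
      then H'.neighborSet u else ∅ := by
    intro u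
    split_ifs with h
    · ext v; simp only [SimpleGraph.mem_neighborSet]
      exact ⟨fun hh => hh.1, fun hh => ⟨hh, h⟩⟩
    · ext v; simp only [SimpleGraph.mem_neighborSet, Set.mem_empty_iff_false, iff_false]
      rintro ⟨h1, h2'⟩; exact h h2'
  have hdeg : ∀ u, H''.degree u = (H''.neighborSet u).ncard := by
    intro u
    rw [← SimpleGraph.card_neighborSet_eq_degree]
    rw [Set.ncard_eq_toFinset_card']
    simp
  have hNx : H'.neighborSet x = H.neighborSet x \ {y} := by
    ext v
    simp only [hH'def, SimpleGraph.mem_neighborSet, SimpleGraph.deleteEdges_adj,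
      Set.mem_singleton_iff, Set.mem_diff]
    constructor
    · rintro ⟨h1, h2'⟩
      refine ⟨h1, fun hv => h2' ?_⟩
      subst hv; rfl
    · rintro ⟨h1, h2'⟩
      refine ⟨h1, fun hs => ?_⟩
      rw [Sym2.eq_iff] at hs
      rcases hs with ⟨-, h'⟩ | ⟨h', -⟩
      · exact h2' h'
      · exact hxy.ne h'
  have hNother : ∀ v, v ≠ x → v ≠ y → H'.neighborSet v = H.neighborSet v := by
    intro v hvx hvy
    ext u
    simp only [hH'def, SimpleGraph.mem_neighborSet, SimpleGraph.deleteEdges_adj,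
      Set.mem_singleton_iff]
    constructor
    · exact fun h => h.1
    · intro h
      refine ⟨h, fun hs => ?_⟩
      rw [Sym2.eq_iff] at hs
      rcases hs with ⟨rfl, _⟩ | ⟨rfl, _⟩
      · exact hvx rfl
      · exact hvy rfl
  have hdx : H''.degree x = 1 := by
    rw [hdeg, hN x, if_pos rfl, hNx]
    rw [Set.ncard_diff_singleton_of_mem (show y ∈ H.neighborSet x from hxy),
      h2 x]
  obtain ⟨u, hux, hodd⟩ :=
    H''.exists_ne_odd_degree_of_exists_odd_degree x (by rw [hdx]; exact odd_one)
  rw [hdeg, hN u] at hodd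
  by_cases hu : H'.connectedComponentMk u = H'.connectedComponentMk x
  · rw [if_pos hu] at hodd
    have huy : u ≠ y := by rintro rfl; exact hyK hu
    rw [hNother u hux huy, h2 u, Nat.odd_iff] at hodd
    omega
  · rw [if_neg hu, Set.ncard_empty, Nat.odd_iff] at hodd
    omega

/-- Reachability transfers along a graph relation on edges. -/
lemma reachable_of_adj_reachable {H H2 : SimpleGraph V}
    (h : ∀ u v, H.Adj u v → H2.Reachable u v) {x y : V} (hr : H.Reachable x y) :
    H2.Reachable x y := by
  obtain ⟨p⟩ := hr
  induction p with
  | nil => exact SimpleGraph.Reachable.refl _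
  | cons hadj _ ih => exact (h _ _ hadj).trans ih

lemma card_compl_pair {α : Type*} [Finite α] {a b : α} (h : a ≠ b) :
    Nat.card ↥({a, b}ᶜ : Set α) = Nat.card α - 2 := by
  classical
  rw [Nat.card_coe_set_eq]
  have h1 := Set.ncard_add_ncard_compl ({a, b} : Set α) (Set.toFinite _) (Set.toFinite _)
  rw [Set.ncard_pair h] at h1
  omega

lemma hexagon_switch (G F : SimpleGraph V) (hFG : F ≤ G)
    (hF2 : ∀ v, (F.neighborSet v).ncard = 2)
    (v0 v1 v2 v3 v4 v5 : V)
    (d01 : v0 ≠ v1) (d02 : v0 ≠ v2) (d03 : v0 ≠ v3) (d04 : v0 ≠ v4) (d05 : v0 ≠ v5)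
    (d12 : v1 ≠ v2) (d13 : v1 ≠ v3) (d14 : v1 ≠ v4) (d15 : v1 ≠ v5)
    (d23 : v2 ≠ v3) (d24 : v2 ≠ v4) (d25 : v2 ≠ v5)
    (d34 : v3 ≠ v4) (d35 : v3 ≠ v5) (d45 : v4 ≠ v5)
    (S : Set (Sym2 V))
    (hS : S = {s(v0,v1), s(v1,v2), s(v2,v3), s(v3,v4), s(v4,v5), s(v5,v0)})
    (hSG : ∀ e ∈ S, e ∈ G.edgeSet)
    (hA : F.Adj v0 v1) (hB : F.Adj v2 v3) (hD : F.Adj v4 v5)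
    (hX : ¬ F.Adj v1 v2) (hY : ¬ F.Adj v3 v4) (hZ : ¬ F.Adj v5 v0)
    (h02 : F.connectedComponentMk v0 ≠ F.connectedComponentMk v2)
    (h04 : F.connectedComponentMk v0 ≠ F.connectedComponentMk v4)
    (h24 : F.connectedComponentMk v2 ≠ F.connectedComponentMk v4) :
    (∀ v, ((symmDiff F (SimpleGraph.fromEdgeSet S)).neighborSet v).ncard = 2) ∧
      symmDiff F (SimpleGraph.fromEdgeSet S) ≤ G ∧
      Nat.card (symmDiff F (SimpleGraph.fromEdgeSet S)).ConnectedComponent =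
        Nat.card F.ConnectedComponent - 2 := by
  classical
  set F' := symmDiff F (SimpleGraph.fromEdgeSet S) with hF'def
  have hadj : ∀ u v, F'.Adj u v ↔
      ((F.Adj u v ∧ s(u,v) ∉ S) ∨ (s(u,v) ∈ S ∧ ¬ F.Adj u v ∧ u ≠ v)) := by
    intro u v
    have hneq : F.Adj u v → u ≠ v := fun h => F.ne_of_adj h
    rw [hF'def, symmDiff_def]
    simp only [SimpleGraph.sup_adj, SimpleGraph.sdiff_adj, SimpleGraph.fromEdgeSet_adj]
    tauto
  -- membership facts
  have m01 : s(v0,v1) ∈ S := by rw [hS]; simp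
  have m12 : s(v1,v2) ∈ S := by rw [hS]; simp
  have m23 : s(v2,v3) ∈ S := by rw [hS]; simp
  have m34 : s(v3,v4) ∈ S := by rw [hS]; simp
  have m45 : s(v4,v5) ∈ S := by rw [hS]; simp
  have m50 : s(v5,v0) ∈ S := by rw [hS]; simp
  have m10 : s(v1,v0) ∈ S := by rw [Sym2.eq_swap]; exact m01
  have m32 : s(v3,v2) ∈ S := by rw [Sym2.eq_swap]; exact m23
  have m54 : s(v5,v4) ∈ S := by rw [Sym2.eq_swap]; exact m45
  have m05 : s(v0,v5) ∈ S := by rw [Sym2.eq_swap]; exact m50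
  have m21 : s(v2,v1) ∈ S := by rw [Sym2.eq_swap]; exact m12
  have m43 : s(v4,v3) ∈ S := by rw [Sym2.eq_swap]; exact m34
  -- which vertices appear in hexagon edges
  have hhexv : ∀ u z : V, s(u,z) ∈ S →
      u = v0 ∨ u = v1 ∨ u = v2 ∨ u = v3 ∨ u = v4 ∨ u = v5 := by
    intro u z h
    rw [hS] at h
    simp only [Set.mem_insert_iff, Set.mem_singleton_iff, Sym2.eq_iff] at h
    rcases h with ((⟨h1,h2⟩|⟨h1,h2⟩)|(⟨h1,h2⟩|⟨h1,h2⟩)|(⟨h1,h2⟩|⟨h1,h2⟩)|(⟨h1,h2⟩|⟨h1,h2⟩)|(⟨h1,h2⟩|⟨h1,h2⟩)|(⟨h1,h2⟩|⟨h1,h2⟩)) <;>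
      first
        | exact Or.inl h1 | exact Or.inr (Or.inl h1) | exact Or.inr (Or.inr (Or.inl h1))
        | exact Or.inr (Or.inr (Or.inr (Or.inl h1)))
        | exact Or.inr (Or.inr (Or.inr (Or.inr (Or.inl h1))))
        | exact Or.inr (Or.inr (Or.inr (Or.inr (Or.inr h1))))
  -- degree of a hexagon vertex
  have degkey : ∀ p q r : V, F.Adj p q → s(p,q) ∈ S → s(p,r) ∈ S → ¬ F.Adj p r → p ≠ r →
      (∀ z, s(p,z) ∈ S → z = q ∨ z = r) → ((F'.neighborSet p).ncard = 2) := by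
    intro p q r hpq hpqS hprS hpr hpr' honly
    obtain ⟨x, y, hxy, hset⟩ := Set.ncard_eq_two.mp (hF2 p)
    have hq : q ∈ ({x, y} : Set V) := by rw [← hset]; exact hpq
    obtain ⟨u, hqu, hne, hsetu⟩ : ∃ u, F.Adj p u ∧ u ≠ q ∧ F.neighborSet p = {q, u} := by
      rcases hq with rfl | rfl
      · refine ⟨y, ?_, hxy.symm, by rw [hset]⟩
        have : y ∈ F.neighborSet p := by rw [hset]; simp
        exact this
      · refine ⟨x, ?_, hxy, by rw [hset, Set.pair_comm]⟩
        have : x ∈ F.neighborSet p := by rw [hset]; simp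
        exact this
    have hur : u ≠ r := fun h => hpr (h ▸ hqu)
    have huS : s(p,u) ∉ S := fun h => (honly u h).elim (fun h' => hne h') (fun h' => hur h')
    have hNset : F'.neighborSet p = {u, r} := by
      ext z
      simp only [SimpleGraph.mem_neighborSet, hadj, Set.mem_insert_iff, Set.mem_singleton_iff]
      constructor
      · rintro (⟨hz1, hz2⟩ | ⟨hz1, hz2, hz3⟩)
        · have hz : z ∈ F.neighborSet p := hz1
          rw [hsetu] at hz
          rcases hz with rfl | rfl
          · exact absurd hpqS hz2
          · exact Or.inl rfl
        · rcases honly z hz1 with rfl | rfl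
          · exact absurd hpq hz2
          · exact Or.inr rfl
      · rintro (rfl | rfl)
        · exact Or.inl ⟨hqu, huS⟩
        · exact Or.inr ⟨hprS, hpr, hpr'⟩
    rw [hNset, Set.ncard_pair hur]
  -- the "only" facts
  have only0 : ∀ z, s(v0,z) ∈ S → z = v1 ∨ z = v5 := by
    intro z hz; rw [hS] at hz
    simp only [Set.mem_insert_iff, Set.mem_singleton_iff, Sym2.eq_iff] at hz
    rcases hz with ((⟨h1,h2⟩|⟨h1,h2⟩)|(⟨h1,h2⟩|⟨h1,h2⟩)|(⟨h1,h2⟩|⟨h1,h2⟩)|(⟨h1,h2⟩|⟨h1,h2⟩)|(⟨h1,h2⟩|⟨h1,h2⟩)|(⟨h1,h2⟩|⟨h1,h2⟩)) <;>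
      first
        | exact Or.inl h2 | exact Or.inr h2 | exact absurd h1 d01 | exact absurd h1 d01.symm | exact absurd h1 d02 | exact absurd h1 d02.symm | exact absurd h1 d03 | exact absurd h1 d03.symm | exact absurd h1 d04 | exact absurd h1 d04.symm | exact absurd h1 d05 | exact absurd h1 d05.symm | exact absurd h1 d12 | exact absurd h1 d12.symm | exact absurd h1 d13 | exact absurd h1 d13.symm | exact absurd h1 d14 | exact absurd h1 d14.symm | exact absurd h1 d15 | exact absurd h1 d15.symm | exact absurd h1 d23 | exact absurd h1 d23.symm | exact absurd h1 d24 | exact absurd h1 d24.symm | exact absurd h1 d25 | exact absurd h1 d25.symm | exact absurd h1 d34 | exact absurd h1 d34.symm | exact absurd h1 d35 | exact absurd h1 d35.symm | exact absurd h1 d45 | exact absurd h1 d45.symm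
  have only1 : ∀ z, s(v1,z) ∈ S → z = v0 ∨ z = v2 := by
    intro z hz; rw [hS] at hz
    simp only [Set.mem_insert_iff, Set.mem_singleton_iff, Sym2.eq_iff] at hz
    rcases hz with ((⟨h1,h2⟩|⟨h1,h2⟩)|(⟨h1,h2⟩|⟨h1,h2⟩)|(⟨h1,h2⟩|⟨h1,h2⟩)|(⟨h1,h2⟩|⟨h1,h2⟩)|(⟨h1,h2⟩|⟨h1,h2⟩)|(⟨h1,h2⟩|⟨h1,h2⟩)) <;>
      first
        | exact Or.inl h2 | exact Or.inr h2 | exact absurd h1 d01 | exact absurd h1 d01.symm | exact absurd h1 d02 | exact absurd h1 d02.symm | exact absurd h1 d03 | exact absurd h1 d03.symm | exact absurd h1 d04 | exact absurd h1 d04.symm | exact absurd h1 d05 | exact absurd h1 d05.symm | exact absurd h1 d12 | exact absurd h1 d12.symm | exact absurd h1 d13 | exact absurd h1 d13.symm | exact absurd h1 d14 | exact absurd h1 d14.symm | exact absurd h1 d15 | exact absurd h1 d15.symm | exact absurd h1 d23 | exact absurd h1 d23.symm | exact absurd h1 d24 | exact absurd h1 d24.symm | exact absurd h1 d25 | exact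 absurd h1 d25.symm | exact absurd h1 d34 | exact absurd h1 d34.symm | exact absurd h1 d35 | exact absurd h1 d35.symm | exact absurd h1 d45 | exact absurd h1 d45.symm
  have only2 : ∀ z, s(v2,z) ∈ S → z = v3 ∨ z = v1 := by
    intro z hz; rw [hS] at hz
    simp only [Set.mem_insert_iff, Set.mem_singleton_iff, Sym2.eq_iff] at hz
    rcases hz with ((⟨h1,h2⟩|⟨h1,h2⟩)|(⟨h1,h2⟩|⟨h1,h2⟩)|(⟨h1,h2⟩|⟨h1,h2⟩)|(⟨h1,h2⟩|⟨h1,h2⟩)|(⟨h1,h2⟩|⟨h1,h2⟩)|(⟨h1,h2⟩|⟨h1,h2⟩)) <;>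
      first
        | exact Or.inl h2 | exact Or.inr h2 | exact absurd h1 d01 | exact absurd h1 d01.symm | exact absurd h1 d02 | exact absurd h1 d02.symm | exact absurd h1 d03 | exact absurd h1 d03.symm | exact absurd h1 d04 | exact absurd h1 d04.symm | exact absurd h1 d05 | exact absurd h1 d05.symm | exact absurd h1 d12 | exact absurd h1 d12.symm | exact absurd h1 d13 | exact absurd h1 d13.symm | exact absurd h1 d14 | exact absurd h1 d14.symm | exact absurd h1 d15 | exact absurd h1 d15.symm | exact absurd h1 d23 | exact absurd h1 d23.symm | exact absurd h1 d24 | exact absurd h1 d24.symm | exact absurd h1 d25 | exact absurd h1 d25.symm | exact absurd h1 d34 | exact absurd h1 d34.symm | exact absurd h1 d35 | exact absurd h1 d35.symm | exact absurd h1 d45 | exact absurd h1 d45.symm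
  have only3 : ∀ z, s(v3,z) ∈ S → z = v2 ∨ z = v4 := by
    intro z hz; rw [hS] at hz
    simp only [Set.mem_insert_iff, Set.mem_singleton_iff, Sym2.eq_iff] at hz
    rcases hz with ((⟨h1,h2⟩|⟨h1,h2⟩)|(⟨h1,h2⟩|⟨h1,h2⟩)|(⟨h1,h2⟩|⟨h1,h2⟩)|(⟨h1,h2⟩|⟨h1,h2⟩)|(⟨h1,h2⟩|⟨h1,h2⟩)|(⟨h1,h2⟩|⟨h1,h2⟩)) <;>
      first
        | exact Or.inl h2 | exact Or.inr h2 | exact absurd h1 d01 | exact absurd h1 d01.symm | exact absurd h1 d02 | exact absurd h1 d02.symm | exact absurd h1 d03 | exact absurd h1 d03.symm | exact absurd h1 d04 | exact absurd h1 d04.symm | exact absurd h1 d05 | exact absurd h1 d05.symm | exact absurd h1 d12 | exact absurd h1 d12.symm | exact absurd h1 d13 | exact absurd h1 d13.symm | exact absurd h1 d14 | exact absurd h1 d14.symm | exact absurd h1 d15 | exact absurd h1 d15.symm | exact absurd h1 d23 | exact absurd h1 d23.symm | exact absurd h1 d24 | exact absurd h1 d24.symm | exact absurd h1 d25 | exact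 absurd h1 d25.symm | exact absurd h1 d34 | exact absurd h1 d34.symm | exact absurd h1 d35 | exact absurd h1 d35.symm | exact absurd h1 d45 | exact absurd h1 d45.symm
  have only4 : ∀ z, s(v4,z) ∈ S → z = v5 ∨ z = v3 := by
    intro z hz; rw [hS] at hz
    simp only [Set.mem_insert_iff, Set.mem_singleton_iff, Sym2.eq_iff] at hz
    rcases hz with ((⟨h1,h2⟩|⟨h1,h2⟩)|(⟨h1,h2⟩|⟨h1,h2⟩)|(⟨h1,h2⟩|⟨h1,h2⟩)|(⟨h1,h2⟩|⟨h1,h2⟩)|(⟨h1,h2⟩|⟨h1,h2⟩)|(⟨h1,h2⟩|⟨h1,h2⟩)) <;>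
      first
        | exact Or.inl h2 | exact Or.inr h2 | exact absurd h1 d01 | exact absurd h1 d01.symm | exact absurd h1 d02 | exact absurd h1 d02.symm | exact absurd h1 d03 | exact absurd h1 d03.symm | exact absurd h1 d04 | exact absurd h1 d04.symm | exact absurd h1 d05 | exact absurd h1 d05.symm | exact absurd h1 d12 | exact absurd h1 d12.symm | exact absurd h1 d13 | exact absurd h1 d13.symm | exact absurd h1 d14 | exact absurd h1 d14.symm | exact absurd h1 d15 | exact absurd h1 d15.symm | exact absurd h1 d23 | exact absurd h1 d23.symm | exact absurd h1 d24 | exact absurd h1 d24.symm | exact absurd h1 d25 | exact absurd h1 d25.symm | exact absurd h1 d34 | exact absurd h1 d34.symm | exact absurd h1 d35 | exact absurd h1 d35.symm | exact absurd h1 d45 | exact absurd h1 d45.symm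
  have only5 : ∀ z, s(v5,z) ∈ S → z = v4 ∨ z = v0 := by
    intro z hz; rw [hS] at hz
    simp only [Set.mem_insert_iff, Set.mem_singleton_iff, Sym2.eq_iff] at hz
    rcases hz with ((⟨h1,h2⟩|⟨h1,h2⟩)|(⟨h1,h2⟩|⟨h1,h2⟩)|(⟨h1,h2⟩|⟨h1,h2⟩)|(⟨h1,h2⟩|⟨h1,h2⟩)|(⟨h1,h2⟩|⟨h1,h2⟩)|(⟨h1,h2⟩|⟨h1,h2⟩)) <;>
      first
        | exact Or.inl h2 | exact Or.inr h2 | exact absurd h1 d01 | exact absurd h1 d01.symm | exact absurd h1 d02 | exact absurd h1 d02.symm | exact absurd h1 d03 | exact absurd h1 d03.symm | exact absurd h1 d04 | exact absurd h1 d04.symm | exact absurd h1 d05 | exact absurd h1 d05.symm | exact absurd h1 d12 | exact absurd h1 d12.symm | exact absurd h1 d13 | exact absurd h1 d13.symm | exact absurd h1 d14 | exact absurd h1 d14.symm | exact absurd h1 d15 | exact absurd h1 d15.symm | exact absurd h1 d23 | exact absurd h1 d23.symm | exact absurd h1 d24 | exact absurd h1 d24.symm | exact absurd h1 d25 | exact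 absurd h1 d25.symm | exact absurd h1 d34 | exact absurd h1 d34.symm | exact absurd h1 d35 | exact absurd h1 d35.symm | exact absurd h1 d45 | exact absurd h1 d45.symm
  have part1 : ∀ v, (F'.neighborSet v).ncard = 2 := by
    intro v
    by_cases hv : v = v0 ∨ v = v1 ∨ v = v2 ∨ v = v3 ∨ v = v4 ∨ v = v5
    · rcases hv with rfl | rfl | rfl | rfl | rfl | rfl
      · exact degkey _ v1 v5 hA m01 m05 (fun h => hZ h.symm) d05 only0
      · exact degkey _ v0 v2 hA.symm m10 m12 hX d12 only1
      · exact degkey _ v3 v1 hB m23 m21 (fun h => hX h.symm) d12.symm only2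
      · exact degkey _ v2 v4 hB.symm m32 m34 hY d34 only3
      · exact degkey _ v5 v3 hD m45 m43 (fun h => hY h.symm) d34.symm only4
      · exact degkey _ v4 v0 hD.symm m54 m50 hZ (fun h => d05 h.symm) only5
    · push_neg at hv
      obtain ⟨h0, h1, h2, h3, h4, h5⟩ := hv
      have hEq : F'.neighborSet v = F.neighborSet v := by
        ext z
        simp only [SimpleGraph.mem_neighborSet, hadj]
        constructor
        · rintro (⟨hz1, _⟩ | ⟨hz1, _, _⟩)
          · exact hz1
          · rcases hhexv v z hz1 with rfl | rfl | rfl | rfl | rfl | rfl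
            exacts [absurd rfl h0, absurd rfl h1, absurd rfl h2, absurd rfl h3,
              absurd rfl h4, absurd rfl h5]
        · intro hz
          refine Or.inl ⟨hz, fun hs => ?_⟩
          rcases hhexv v z hs with rfl | rfl | rfl | rfl | rfl | rfl
          exacts [h0 rfl, h1 rfl, h2 rfl, h3 rfl, h4 rfl, h5 rfl]
      rw [hEq, hF2]
  have part2 : F' ≤ G := by
    intro u v huv
    rw [hadj] at huv
    rcases huv with ⟨h1, _⟩ | ⟨h1, _, _⟩
    · exact hFG h1
    · exact G.mem_edgeSet.mp (hSG _ h1)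
  -- component equalities from adjacency
  have c23 : F.connectedComponentMk v2 = F.connectedComponentMk v3 :=
    SimpleGraph.ConnectedComponent.connectedComponentMk_eq_of_adj hB
  have c45 : F.connectedComponentMk v4 = F.connectedComponentMk v5 :=
    SimpleGraph.ConnectedComponent.connectedComponentMk_eq_of_adj hD
  have c01 : F.connectedComponentMk v0 = F.connectedComponentMk v1 :=
    SimpleGraph.ConnectedComponent.connectedComponentMk_eq_of_adj hA
  have notS_of_F : ∀ u u', F.Adj u u' → s(u,u') ∈ S →
      s(u,u') = s(v0,v1) ∨ s(u,u') = s(v2,v3) ∨ s(u,u') = s(v4,v5) := by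
    intro u u' hF hS'
    rw [hS] at hS'
    simp only [Set.mem_insert_iff, Set.mem_singleton_iff] at hS'
    rcases hS' with h | h | h | h | h | h
    · exact Or.inl h
    · exact absurd (F.mem_edgeSet.mp (h ▸ F.mem_edgeSet.mpr hF)) hX
    · exact Or.inr (Or.inl h)
    · exact absurd (F.mem_edgeSet.mp (h ▸ F.mem_edgeSet.mpr hF)) hY
    · exact Or.inr (Or.inr h)
    · exact absurd (F.mem_edgeSet.mp (h ▸ F.mem_edgeSet.mpr hF)) hZ
  have liftedge : ∀ p q : V, F.Adj p q →
      (∀ u u', F.Adj u u' → s(u,u') ≠ s(p,q) → F.Reachable p u → F'.Adj u u') →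
      F'.Reachable p q := by
    intro p q hpq hsub
    obtain ⟨pw⟩ := two_regular_reachable_deleteEdge F hF2 hpq
    suffices h : ∀ r q'', ∀ pw : (F.deleteEdges {s(p,q)}).Walk r q'',
        F.Reachable p r → F'.Reachable r q'' by
      exact h p q pw (SimpleGraph.Reachable.refl p)
    intro r q'' pw
    induction pw with
    | nil => exact fun _ => SimpleGraph.Reachable.refl _
    | cons hru pw ih =>
      intro hpr
      rw [SimpleGraph.deleteEdges_adj, Set.mem_singleton_iff] at hru
      have h1 : F'.Adj _ _ := hsub _ _ hru.1 hru.2 hpr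
      exact h1.reachable.trans (ih (hpr.trans hru.1.reachable))
  have r01 : F'.Reachable v0 v1 := by
    apply liftedge v0 v1 hA
    intro u u' hu hne hreach
    rw [hadj]
    by_cases hus : s(u,u') ∈ S
    · exfalso
      rcases notS_of_F u u' hu hus with h | h | h
      · exact hne h
      · have hcc : F.connectedComponentMk v0 = F.connectedComponentMk u :=
          SimpleGraph.ConnectedComponent.sound hreach
        rw [Sym2.eq_iff] at h
        rcases h with ⟨rfl, rfl⟩ | ⟨rfl, rfl⟩
        · exact h02 hcc
        · exact h02 (hcc.trans c23.symm)
      · have hcc : F.connectedComponentMk v0 = F.connectedComponentMk u :=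
          SimpleGraph.ConnectedComponent.sound hreach
        rw [Sym2.eq_iff] at h
        rcases h with ⟨rfl, rfl⟩ | ⟨rfl, rfl⟩
        · exact h04 hcc
        · exact h04 (hcc.trans c45.symm)
    · exact Or.inl ⟨hu, hus⟩
  have r23 : F'.Reachable v2 v3 := by
    apply liftedge v2 v3 hB
    intro u u' hu hne hreach
    rw [hadj]
    by_cases hus : s(u,u') ∈ S
    · exfalso
      rcases notS_of_F u u' hu hus with h | h | h
      · have hcc : F.connectedComponentMk v2 = F.connectedComponentMk u :=
          SimpleGraph.ConnectedComponent.sound hreach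
        rw [Sym2.eq_iff] at h
        rcases h with ⟨rfl, rfl⟩ | ⟨rfl, rfl⟩
        · exact h02 hcc.symm
        · exact h02 (hcc.trans c01.symm).symm
      · exact hne h
      · have hcc : F.connectedComponentMk v2 = F.connectedComponentMk u :=
          SimpleGraph.ConnectedComponent.sound hreach
        rw [Sym2.eq_iff] at h
        rcases h with ⟨rfl, rfl⟩ | ⟨rfl, rfl⟩
        · exact h24 hcc
        · exact h24 (hcc.trans c45.symm)
    · exact Or.inl ⟨hu, hus⟩
  have r45 : F'.Reachable v4 v5 := by
    apply liftedge v4 v5 hD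
    intro u u' hu hne hreach
    rw [hadj]
    by_cases hus : s(u,u') ∈ S
    · exfalso
      rcases notS_of_F u u' hu hus with h | h | h
      · have hcc : F.connectedComponentMk v4 = F.connectedComponentMk u :=
          SimpleGraph.ConnectedComponent.sound hreach
        rw [Sym2.eq_iff] at h
        rcases h with ⟨rfl, rfl⟩ | ⟨rfl, rfl⟩
        · exact h04 hcc.symm
        · exact h04 (hcc.trans c01.symm).symm
      · have hcc : F.connectedComponentMk v4 = F.connectedComponentMk u :=
          SimpleGraph.ConnectedComponent.sound hreach
        rw [Sym2.eq_iff] at h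
        rcases h with ⟨rfl, rfl⟩ | ⟨rfl, rfl⟩
        · exact h24 hcc.symm
        · exact h24 (hcc.trans c23.symm).symm
      · exact hne h
    · exact Or.inl ⟨hu, hus⟩
  have x12 : F'.Adj v1 v2 := (hadj _ _).mpr (Or.inr ⟨m12, hX, d12⟩)
  have x34 : F'.Adj v3 v4 := (hadj _ _).mpr (Or.inr ⟨m34, hY, d34⟩)
  have q02 : F'.Reachable v0 v2 := r01.trans x12.reachable
  have q04 : F'.Reachable v0 v4 := (q02.trans r23).trans x34.reachable
  have adjstep : ∀ u u', F.Adj u u' → F'.Reachable u u' := by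
    intro u u' hu
    by_cases hus : s(u,u') ∈ S
    · rcases notS_of_F u u' hu hus with h | h | h <;> rw [Sym2.eq_iff] at h <;>
        rcases h with ⟨rfl, rfl⟩ | ⟨rfl, rfl⟩
      exacts [r01, r01.symm, r23, r23.symm, r45, r45.symm]
    · exact ((hadj _ _).mpr (Or.inl ⟨hu, hus⟩)).reachable
  have forward : ∀ u u', F.Reachable u u' → F'.Reachable u u' := fun u u' h =>
    reachable_of_adj_reachable adjstep h
  -- the merged-classes relation
  have HsClosed : ∀ u u' : V, F.Reachable u u' →
      (F.Reachable u' v0 ∨ F.Reachable u' v2 ∨ F.Reachable u' v4) →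
      (F.Reachable u v0 ∨ F.Reachable u v2 ∨ F.Reachable u v4) := by
    intro u u' h hh
    rcases hh with h1 | h1 | h1
    exacts [Or.inl (h.trans h1), Or.inr (Or.inl (h.trans h1)), Or.inr (Or.inr (h.trans h1))]
  have hexHs : ∀ u : V, (u = v0 ∨ u = v1 ∨ u = v2 ∨ u = v3 ∨ u = v4 ∨ u = v5) →
      (F.Reachable u v0 ∨ F.Reachable u v2 ∨ F.Reachable u v4) := by
    rintro u (rfl | rfl | rfl | rfl | rfl | rfl)
    · exact Or.inl (SimpleGraph.Reachable.refl _)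
    · exact Or.inl hA.symm.reachable
    · exact Or.inr (Or.inl (SimpleGraph.Reachable.refl _))
    · exact Or.inr (Or.inl hB.symm.reachable)
    · exact Or.inr (Or.inr (SimpleGraph.Reachable.refl _))
    · exact Or.inr (Or.inr hD.symm.reachable)
  have backward : ∀ u u', F'.Reachable u u' →
      (F.Reachable u u' ∨
        ((F.Reachable u v0 ∨ F.Reachable u v2 ∨ F.Reachable u v4) ∧
         (F.Reachable u' v0 ∨ F.Reachable u' v2 ∨ F.Reachable u' v4))) := by
    have Radj : ∀ u u', F'.Adj u u' →
        (F.Reachable u u' ∨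
          ((F.Reachable u v0 ∨ F.Reachable u v2 ∨ F.Reachable u v4) ∧
           (F.Reachable u' v0 ∨ F.Reachable u' v2 ∨ F.Reachable u' v4))) := by
      intro u u' h
      rw [hadj] at h
      rcases h with ⟨h1, _⟩ | ⟨h1, _, _⟩
      · exact Or.inl h1.reachable
      · refine Or.inr ⟨hexHs u (hhexv u u' h1), hexHs u' (hhexv u' u ?_)⟩
        rw [Sym2.eq_swap]; exact h1
    intro u u' h
    obtain ⟨p⟩ := h
    induction p with
    | nil => exact Or.inl (SimpleGraph.Reachable.refl _)
    | cons hadj' p ih =>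
      rcases Radj _ _ hadj' with hab | ⟨ha, hb⟩
      · rcases ih with hbc | ⟨hb', hc⟩
        · exact Or.inl (hab.trans hbc)
        · exact Or.inr ⟨HsClosed _ _ hab hb', hc⟩
      · rcases ih with hbc | ⟨hb', hc⟩
        · exact Or.inr ⟨ha, HsClosed _ _ hbc.symm hb⟩
        · exact Or.inr ⟨ha, hc⟩
  have forwardCC : ∀ u u' : V, F.connectedComponentMk u = F.connectedComponentMk u' →
      F'.connectedComponentMk u = F'.connectedComponentMk u' := fun u u' h =>
    SimpleGraph.ConnectedComponent.sound (forward _ _ (SimpleGraph.ConnectedComponent.exact h))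
  let g : F.ConnectedComponent → F'.ConnectedComponent :=
    SimpleGraph.ConnectedComponent.lift (fun v => F'.connectedComponentMk v)
      (fun u u' p _ => SimpleGraph.ConnectedComponent.sound (forward u u' ⟨p⟩))
  have hbij : Function.Bijective
      (fun c : ↥({F.connectedComponentMk v2, F.connectedComponentMk v4}ᶜ : Set _) => g c.1) := by
    constructor
    · rintro ⟨c, hc⟩ ⟨c', hc'⟩ hgc
      obtain ⟨u, hu⟩ := Quot.exists_rep c
      have hu' : F.connectedComponentMk u = c := hu
      subst hu'
      obtain ⟨u', hu2⟩ := Quot.exists_rep c'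
      have hu2' : F.connectedComponentMk u' = c' := hu2
      subst hu2'
      simp only [Set.mem_compl_iff, Set.mem_insert_iff, Set.mem_singleton_iff] at hc hc'
      push_neg at hc hc'
      have hR := backward u u' (SimpleGraph.ConnectedComponent.exact hgc)
      apply Subtype.ext
      rcases hR with h | ⟨hu, hu'⟩
      · exact SimpleGraph.ConnectedComponent.sound h
      · have e1 : F.connectedComponentMk u = F.connectedComponentMk v0 := by
          rcases hu with h | h | h
          · exact SimpleGraph.ConnectedComponent.sound h
          · exact absurd (SimpleGraph.ConnectedComponent.sound h) hc.1
          · exact absurd (SimpleGraph.ConnectedComponent.sound h) hc.2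
        have e2 : F.connectedComponentMk u' = F.connectedComponentMk v0 := by
          rcases hu' with h | h | h
          · exact SimpleGraph.ConnectedComponent.sound h
          · exact absurd (SimpleGraph.ConnectedComponent.sound h) hc'.1
          · exact absurd (SimpleGraph.ConnectedComponent.sound h) hc'.2
        exact e1.trans e2.symm
    · intro d
      obtain ⟨u, hu⟩ := Quot.exists_rep d
      have hu' : F'.connectedComponentMk u = d := hu
      subst hu'
      by_cases h2c : F.connectedComponentMk u = F.connectedComponentMk v2
      · refine ⟨⟨F.connectedComponentMk v0, ?_⟩, ?_⟩
        · simp only [Set.mem_compl_iff, Set.mem_insert_iff, Set.mem_singleton_iff]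
          push_neg
          exact ⟨h02, h04⟩
        · show F'.connectedComponentMk v0 = _
          exact (SimpleGraph.ConnectedComponent.sound q02).trans (forwardCC u v2 h2c).symm
      · by_cases h4c : F.connectedComponentMk u = F.connectedComponentMk v4
        · refine ⟨⟨F.connectedComponentMk v0, ?_⟩, ?_⟩
          · simp only [Set.mem_compl_iff, Set.mem_insert_iff, Set.mem_singleton_iff]
            push_neg
            exact ⟨h02, h04⟩
          · show F'.connectedComponentMk v0 = _
            exact (SimpleGraph.ConnectedComponent.sound q04).trans (forwardCC u v4 h4c).symm
        · refine ⟨⟨F.connectedComponentMk u, ?_⟩, rfl⟩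
          simp only [Set.mem_compl_iff, Set.mem_insert_iff, Set.mem_singleton_iff]
          push_neg
          exact ⟨h2c, h4c⟩
  refine ⟨part1, part2, ?_⟩
  haveI : DecidableRel F.Adj := Classical.decRel _
  rw [← Nat.card_eq_of_bijective _ hbij]
  exact card_compl_pair h24

end Helpers

set_option maxHeartbeats 4000000 in
/-- Let `F` be a 2-regular spanning subgraph (2-factor) of a cubic graph `G` and
let `h` be a hexagonal face of `G` such that exactly three pairwise non-adjacent
edges of its boundary 6-cycle `C` belong to `F`, lying on three distinct cycles
of `F`. Then the symmetric difference `F ∆ C` is again a 2-regular spanning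
subgraph of `G`, and its number of connected components is exactly two less than
that of `F`. -/
theorem resonant_hexagon_switch {V : Type} [Fintype V] [DecidableEq V]
    (G : SimpleGraph V) (hcubic : ∀ v, (G.neighborSet v).ncard = 3)
    (F : SimpleGraph V) (hFG : F ≤ G)
    (hF2 : ∀ v, (F.neighborSet v).ncard = 2)
    (a : V) (w : G.Walk a a) (hw : w.IsCycle) (hw6 : w.length = 6)
    (e1 e2 e3 : Sym2 V)
    (he1 : e1 ∈ w.edges ∧ e1 ∈ F.edgeSet)
    (he2 : e2 ∈ w.edges ∧ e2 ∈ F.edgeSet)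
    (he3 : e3 ∈ w.edges ∧ e3 ∈ F.edgeSet)
    (hdist : e1 ≠ e2 ∧ e1 ≠ e3 ∧ e2 ≠ e3)
    (honly : ∀ e ∈ w.edges, e ∈ F.edgeSet → e = e1 ∨ e = e2 ∨ e = e3)
    (hnonadj : Sym2.NoCommonVertex e1 e2 ∧ Sym2.NoCommonVertex e1 e3 ∧
      Sym2.NoCommonVertex e2 e3)
    (hcomp : ∀ x y : V, x ∈ e1 → (y ∈ e2 ∨ y ∈ e3) →
        F.connectedComponentMk x ≠ F.connectedComponentMk y)
    (hcomp' : ∀ x y : V, x ∈ e2 → y ∈ e3 →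
        F.connectedComponentMk x ≠ F.connectedComponentMk y) :
    (∀ v, (((symmDiff F (SimpleGraph.fromEdgeSet {e | e ∈ w.edges})).neighborSet v).ncard = 2)) ∧
      symmDiff F (SimpleGraph.fromEdgeSet {e | e ∈ w.edges}) ≤ G ∧
      Nat.card (symmDiff F (SimpleGraph.fromEdgeSet {e | e ∈ w.edges})).ConnectedComponent =
        Nat.card F.ConnectedComponent - 2 := by
  classical
  rcases w with _ | @⟨_, b1, _, h1, w⟩
  · simp at hw6
  rcases w with _ | @⟨_, b2, _, h2, w⟩
  · simp at hw6
  rcases w with _ | @⟨_, b3, _, h3, w⟩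
  · simp at hw6
  rcases w with _ | @⟨_, b4, _, h4, w⟩
  · simp at hw6
  rcases w with _ | @⟨_, b5, _, h5, w⟩
  · simp at hw6
  rcases w with _ | @⟨_, b6, _, h6, w⟩
  · simp at hw6
  rcases w with _ | @⟨_, c, _, h7, w⟩
  case cons.cons.cons.cons.cons.cons.cons => simp at hw6
  -- distinctness of the six vertices
  have hnd := hw.support_nodup
  simp only [SimpleGraph.Walk.support_cons, SimpleGraph.Walk.support_nil, List.tail_cons,
    List.nodup_cons, List.mem_cons, List.mem_singleton, List.not_mem_nil, or_false,
    List.nodup_nil, and_true, not_or] at hnd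
  obtain ⟨⟨e12, e13, e14, e15, e1a⟩, ⟨e23, e24, e25, e2a⟩, ⟨e34, e35, e3a⟩, ⟨e45, e4a⟩, e5a, -⟩ := hnd
  obtain ⟨n12, n13, n23⟩ := hnonadj
  obtain ⟨ne12, ne13, ne23⟩ := hdist
  have h1m := he1.1
  have h2m := he2.1
  have h3m := he3.1
  simp only [SimpleGraph.Walk.edges_cons, SimpleGraph.Walk.edges_nil, List.mem_cons,
    List.not_mem_nil, or_false] at h1m h2m h3m
  have hset : ({e1, e2, e3} : Set (Sym2 V)) = {s(a,b1), s(b2,b3), s(b4,b5)} ∨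
      ({e1, e2, e3} : Set (Sym2 V)) = {s(b1,b2), s(b3,b4), s(b5,a)} := by
    rcases h1m with rfl|rfl|rfl|rfl|rfl|rfl <;> rcases h2m with rfl|rfl|rfl|rfl|rfl|rfl <;>
      rcases h3m with rfl|rfl|rfl|rfl|rfl|rfl <;>
      first
      | exact absurd (Sym2.mem_mk_left _ _) (n12 _ (Sym2.mem_mk_left _ _))
      | exact absurd (Sym2.mem_mk_right _ _) (n12 _ (Sym2.mem_mk_left _ _))
      | exact absurd (Sym2.mem_mk_left _ _) (n12 _ (Sym2.mem_mk_right _ _))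
      | exact absurd (Sym2.mem_mk_right _ _) (n12 _ (Sym2.mem_mk_right _ _))
      | exact absurd (Sym2.mem_mk_left _ _) (n13 _ (Sym2.mem_mk_left _ _))
      | exact absurd (Sym2.mem_mk_right _ _) (n13 _ (Sym2.mem_mk_left _ _))
      | exact absurd (Sym2.mem_mk_left _ _) (n13 _ (Sym2.mem_mk_right _ _))
      | exact absurd (Sym2.mem_mk_right _ _) (n13 _ (Sym2.mem_mk_right _ _))
      | exact absurd (Sym2.mem_mk_left _ _) (n23 _ (Sym2.mem_mk_left _ _))
      | exact absurd (Sym2.mem_mk_right _ _) (n23 _ (Sym2.mem_mk_left _ _))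
      | exact absurd (Sym2.mem_mk_left _ _) (n23 _ (Sym2.mem_mk_right _ _))
      | exact absurd (Sym2.mem_mk_right _ _) (n23 _ (Sym2.mem_mk_right _ _))
      | exact Or.inl rfl
      | exact Or.inr rfl
      | (left; rw [Set.insert_comm]; done)
      | (right; rw [Set.insert_comm]; done)
      | (left; rw [Set.pair_comm]; done)
      | (right; rw [Set.pair_comm]; done)
      | (left; rw [Set.pair_comm, Set.insert_comm]; done)
      | (right; rw [Set.pair_comm, Set.insert_comm]; done)
      | (left; rw [Set.insert_comm, Set.pair_comm]; done)
      | (right; rw [Set.insert_comm, Set.pair_comm]; done)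
      | (left; rw [Set.pair_comm, Set.insert_comm, Set.pair_comm]; done)
      | (right; rw [Set.pair_comm, Set.insert_comm, Set.pair_comm]; done)
  have hmem : ∀ f : Sym2 V, f ∈ ({e1, e2, e3} : Set (Sym2 V)) → f ∈ F.edgeSet := by
    intro f hf
    simp only [Set.mem_insert_iff, Set.mem_singleton_iff] at hf
    rcases hf with rfl|rfl|rfl
    exacts [he1.2, he2.2, he3.2]
  have hnotF : ∀ u v : V, s(u,v) ∈ (SimpleGraph.Walk.cons h1 (SimpleGraph.Walk.cons h2
      (SimpleGraph.Walk.cons h3 (SimpleGraph.Walk.cons h4 (SimpleGraph.Walk.cons h5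
      (SimpleGraph.Walk.cons h6 SimpleGraph.Walk.nil)))))).edges →
      s(u,v) ∉ ({e1, e2, e3} : Set (Sym2 V)) → ¬F.Adj u v := by
    intro u v hmemw hnot hadj
    refine hnot ?_
    rcases honly _ hmemw (F.mem_edgeSet.mpr hadj) with h|h|h <;> simp [h]
  have hcompall : ∀ f g : Sym2 V, f ∈ ({e1,e2,e3} : Set (Sym2 V)) →
      g ∈ ({e1,e2,e3} : Set (Sym2 V)) → f ≠ g →
      ∀ x y, x ∈ f → y ∈ g → F.connectedComponentMk x ≠ F.connectedComponentMk y := by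
    intro f g hf hg hfg x y hx hy
    simp only [Set.mem_insert_iff, Set.mem_singleton_iff] at hf hg
    rcases hf with rfl|rfl|rfl <;> rcases hg with rfl|rfl|rfl
    · exact absurd rfl hfg
    · exact hcomp x y hx (Or.inl hy)
    · exact hcomp x y hx (Or.inr hy)
    · exact fun h => hcomp y x hy (Or.inl hx) h.symm
    · exact absurd rfl hfg
    · exact hcomp' x y hx hy
    · exact fun h => hcomp y x hy (Or.inr hx) h.symm
    · exact fun h => hcomp' y x hy hx h.symm
    · exact absurd rfl hfg
  rcases hset with hs1 | hs1
  · -- F-edges are s(a,b1), s(b2,b3), s(b4,b5)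
    refine hexagon_switch G F hFG hF2 a b1 b2 b3 b4 b5
      (Ne.symm e1a) (Ne.symm e2a) (Ne.symm e3a) (Ne.symm e4a) (Ne.symm e5a)
      e12 e13 e14 e15 e23 e24 e25 e34 e35 e45
      _ ?_ (fun e he => SimpleGraph.Walk.edges_subset_edgeSet _ he)
      (F.mem_edgeSet.mp (hmem _ (by rw [hs1]; simp)))
      (F.mem_edgeSet.mp (hmem _ (by rw [hs1]; simp)))
      (F.mem_edgeSet.mp (hmem _ (by rw [hs1]; simp)))
      (hnotF b1 b2 (by simp) (by rw [hs1]; simp [Sym2.eq_iff, e12, e13, e14, e15, e1a, e23, e24, e25, e2a, e34, e35, e3a, e45, e4a, e5a, (Ne.symm e12), (Ne.symm e13), (Ne.symm e14), (Ne.symm e15), (Ne.symm e1a), (Ne.symm e23), (Ne.symm e24), (Ne.symm e25), (Ne.symm e2a), (Ne.symm e34), (Ne.symm e35), (Ne.symm e3a), (Ne.symm e45), (Ne.symm e4a), (Ne.symm e5a)]))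
      (hnotF b3 b4 (by simp) (by rw [hs1]; simp [Sym2.eq_iff, e12, e13, e14, e15, e1a, e23, e24, e25, e2a, e34, e35, e3a, e45, e4a, e5a, (Ne.symm e12), (Ne.symm e13), (Ne.symm e14), (Ne.symm e15), (Ne.symm e1a), (Ne.symm e23), (Ne.symm e24), (Ne.symm e25), (Ne.symm e2a), (Ne.symm e34), (Ne.symm e35), (Ne.symm e3a), (Ne.symm e45), (Ne.symm e4a), (Ne.symm e5a)]))
      (hnotF b5 a (by simp) (by rw [hs1]; simp [Sym2.eq_iff, e12, e13, e14, e15, e1a, e23, e24, e25, e2a, e34, e35, e3a, e45, e4a, e5a, (Ne.symm e12), (Ne.symm e13), (Ne.symm e14), (Ne.symm e15), (Ne.symm e1a), (Ne.symm e23), (Ne.symm e24), (Ne.symm e25), (Ne.symm e2a), (Ne.symm e34), (Ne.symm e35), (Ne.symm e3a), (Ne.symm e45), (Ne.symm e4a), (Ne.symm e5a)]))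
      (hcompall s(a,b1) s(b2,b3) (by rw [hs1]; simp) (by rw [hs1]; simp)
        (by simp [Sym2.eq_iff, e12, e13, e14, e15, e1a, e23, e24, e25, e2a, e34, e35, e3a, e45, e4a, e5a, (Ne.symm e12), (Ne.symm e13), (Ne.symm e14), (Ne.symm e15), (Ne.symm e1a), (Ne.symm e23), (Ne.symm e24), (Ne.symm e25), (Ne.symm e2a), (Ne.symm e34), (Ne.symm e35), (Ne.symm e3a), (Ne.symm e45), (Ne.symm e4a), (Ne.symm e5a)]) a b2 (by simp) (by simp))
      (hcompall s(a,b1) s(b4,b5) (by rw [hs1]; simp) (by rw [hs1]; simp)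
        (by simp [Sym2.eq_iff, e12, e13, e14, e15, e1a, e23, e24, e25, e2a, e34, e35, e3a, e45, e4a, e5a, (Ne.symm e12), (Ne.symm e13), (Ne.symm e14), (Ne.symm e15), (Ne.symm e1a), (Ne.symm e23), (Ne.symm e24), (Ne.symm e25), (Ne.symm e2a), (Ne.symm e34), (Ne.symm e35), (Ne.symm e3a), (Ne.symm e45), (Ne.symm e4a), (Ne.symm e5a)]) a b4 (by simp) (by simp))
      (hcompall s(b2,b3) s(b4,b5) (by rw [hs1]; simp) (by rw [hs1]; simp)
        (by simp [Sym2.eq_iff, e12, e13, e14, e15, e1a, e23, e24, e25, e2a, e34, e35, e3a, e45, e4a, e5a, (Ne.symm e12), (Ne.symm e13), (Ne.symm e14), (Ne.symm e15), (Ne.symm e1a), (Ne.symm e23), (Ne.symm e24), (Ne.symm e25), (Ne.symm e2a), (Ne.symm e34), (Ne.symm e35), (Ne.symm e3a), (Ne.symm e45), (Ne.symm e4a), (Ne.symm e5a)]) b2 b4 (by simp) (by simp))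
    ext f
    simp only [Set.mem_setOf_eq, SimpleGraph.Walk.edges_cons, SimpleGraph.Walk.edges_nil,
      List.mem_cons, List.not_mem_nil, or_false, Set.mem_insert_iff, Set.mem_singleton_iff]
  · -- F-edges are s(b1,b2), s(b3,b4), s(b5,a)
    refine hexagon_switch G F hFG hF2 b1 b2 b3 b4 b5 a
      e12 e13 e14 e15 e1a e23 e24 e25 e2a e34 e35 e3a e45 e4a e5a
      _ ?_ (fun e he => SimpleGraph.Walk.edges_subset_edgeSet _ he)
      (F.mem_edgeSet.mp (hmem _ (by rw [hs1]; simp)))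
      (F.mem_edgeSet.mp (hmem _ (by rw [hs1]; simp)))
      (F.mem_edgeSet.mp (hmem _ (by rw [hs1]; simp)))
      (hnotF b2 b3 (by simp) (by rw [hs1]; simp [Sym2.eq_iff, e12, e13, e14, e15, e1a, e23, e24, e25, e2a, e34, e35, e3a, e45, e4a, e5a, (Ne.symm e12), (Ne.symm e13), (Ne.symm e14), (Ne.symm e15), (Ne.symm e1a), (Ne.symm e23), (Ne.symm e24), (Ne.symm e25), (Ne.symm e2a), (Ne.symm e34), (Ne.symm e35), (Ne.symm e3a), (Ne.symm e45), (Ne.symm e4a), (Ne.symm e5a)]))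
      (hnotF b4 b5 (by simp) (by rw [hs1]; simp [Sym2.eq_iff, e12, e13, e14, e15, e1a, e23, e24, e25, e2a, e34, e35, e3a, e45, e4a, e5a, (Ne.symm e12), (Ne.symm e13), (Ne.symm e14), (Ne.symm e15), (Ne.symm e1a), (Ne.symm e23), (Ne.symm e24), (Ne.symm e25), (Ne.symm e2a), (Ne.symm e34), (Ne.symm e35), (Ne.symm e3a), (Ne.symm e45), (Ne.symm e4a), (Ne.symm e5a)]))
      (hnotF a b1 (by simp) (by rw [hs1]; simp [Sym2.eq_iff, e12, e13, e14, e15, e1a, e23, e24, e25, e2a, e34, e35, e3a, e45, e4a, e5a, (Ne.symm e12), (Ne.symm e13), (Ne.symm e14), (Ne.symm e15), (Ne.symm e1a), (Ne.symm e23), (Ne.symm e24), (Ne.symm e25), (Ne.symm e2a), (Ne.symm e34), (Ne.symm e35), (Ne.symm e3a), (Ne.symm e45), (Ne.symm e4a), (Ne.symm e5a)]))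
      (hcompall s(b1,b2) s(b3,b4) (by rw [hs1]; simp) (by rw [hs1]; simp)
        (by simp [Sym2.eq_iff, e12, e13, e14, e15, e1a, e23, e24, e25, e2a, e34, e35, e3a, e45, e4a, e5a, (Ne.symm e12), (Ne.symm e13), (Ne.symm e14), (Ne.symm e15), (Ne.symm e1a), (Ne.symm e23), (Ne.symm e24), (Ne.symm e25), (Ne.symm e2a), (Ne.symm e34), (Ne.symm e35), (Ne.symm e3a), (Ne.symm e45), (Ne.symm e4a), (Ne.symm e5a)]) b1 b3 (by simp) (by simp))
      (hcompall s(b1,b2) s(b5,a) (by rw [hs1]; simp) (by rw [hs1]; simp)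
        (by simp [Sym2.eq_iff, e12, e13, e14, e15, e1a, e23, e24, e25, e2a, e34, e35, e3a, e45, e4a, e5a, (Ne.symm e12), (Ne.symm e13), (Ne.symm e14), (Ne.symm e15), (Ne.symm e1a), (Ne.symm e23), (Ne.symm e24), (Ne.symm e25), (Ne.symm e2a), (Ne.symm e34), (Ne.symm e35), (Ne.symm e3a), (Ne.symm e45), (Ne.symm e4a), (Ne.symm e5a)]) b1 b5 (by simp) (by simp))
      (hcompall s(b3,b4) s(b5,a) (by rw [hs1]; simp) (by rw [hs1]; simp)
        (by simp [Sym2.eq_iff, e12, e13, e14, e15, e1a, e23, e24, e25, e2a, e34, e35, e3a, e45, e4a, e5a, (Ne.symm e12), (Ne.symm e13), (Ne.symm e14), (Ne.symm e15), (Ne.symm e1a), (Ne.symm e23), (Ne.symm e24), (Ne.symm e25), (Ne.symm e2a), (Ne.symm e34), (Ne.symm e35), (Ne.symm e3a), (Ne.symm e45), (Ne.symm e4a), (Ne.symm e5a)]) b3 b5 (by simp) (by simp))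
    ext f
    simp only [Set.mem_setOf_eq, SimpleGraph.Walk.edges_cons, SimpleGraph.Walk.edges_nil,
      List.mem_cons, List.not_mem_nil, or_false, Set.mem_insert_iff, Set.mem_singleton_iff]
    constructor
    · rintro (rfl|rfl|rfl|rfl|rfl|rfl) <;> simp
    · rintro (rfl|rfl|rfl|rfl|rfl|rfl) <;> simp
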